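/- Let ε₁ ∈ [0,1]. Suppose there exist bounded Borel measurable functions v, w : 𝒳̂ → ℝ such that: v(x) ≥ ε₁ for all x ∈ 𝒳₀; v(x) ≤ 𝔼^∞[v(φ_π^{x}(1))] for all x ∈ 𝒳 ∖ 𝒳_r; v(x) ≤ 𝔼^∞[w(φ_π^{x}(1))] − w(x) for all x ∈ 𝒳 ∖ 𝒳_r; v(x) ≤ 1 for all x ∈ 𝒳_r; and v(x) ≤ 0 for all x ∈ 𝒳̂ ∖ 𝒳. Then for every x₀ ∈ 𝒳₀, ℙ^∞(∃k ∈ ℕ: φ_π^{x₀}(k) ∈ 𝒳_r and ∀l ∈ ℕ with l ≤ k: φ_π^{x₀}(l) ∈ 𝒳) ≥ ε₁. -/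
import Mathlib


open MeasureTheory Filter Topology

noncomputable section

/-- Trajectory of the discrete-time system `x(l+1) = f(x(l), d(l))` under the
disturbance sequence `π`, starting from `x0`. -/
def traj {n m : ℕ} (f : (Fin n → ℝ) → (Fin m → ℝ) → (Fin n → ℝ))
    (x0 : Fin n → ℝ) (π : ℕ → Fin m → ℝ) : ℕ → Fin n → ℝ
  | 0 => x0
  | k + 1 => f (traj f x0 π k) (π k)

section Aux

variable {n m : ℕ} {f : (Fin n → ℝ) → (Fin m → ℝ) → (Fin n → ℝ)}

@[simp] lemma traj_zero (x0 : Fin n → ℝ) (π : ℕ → Fin m → ℝ) : traj f x0 π 0 = x0 := rfl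

@[simp] lemma traj_succ (x0 : Fin n → ℝ) (π : ℕ → Fin m → ℝ) (k : ℕ) :
    traj f x0 π (k + 1) = f (traj f x0 π k) (π k) := rfl

lemma traj_congr (x0 : Fin n → ℝ) {π₁ π₂ : ℕ → Fin m → ℝ} :
    ∀ l, (∀ i, i < l → π₁ i = π₂ i) → traj f x0 π₁ l = traj f x0 π₂ l
  | 0, _ => rfl
  | l + 1, h => by
      rw [traj_succ, traj_succ, traj_congr x0 l (fun i hi => h i (Nat.lt_succ_of_lt hi)),
        h l (Nat.lt_succ_self l)]

lemma traj_shift (x0 : Fin n → ℝ) (π : ℕ → Fin m → ℝ) :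
    ∀ l, traj f x0 π (l + 1) = traj f (f x0 (π 0)) (fun i => π (i + 1)) l
  | 0 => rfl
  | l + 1 => by
      rw [traj_succ, traj_shift x0 π l]
      rfl

lemma measurable_traj (hf : Measurable fun p : (Fin n → ℝ) × (Fin m → ℝ) => f p.1 p.2) (l : ℕ) :
    Measurable fun p : (Fin n → ℝ) × (ℕ → Fin m → ℝ) => traj f p.1 p.2 l := by
  induction l with
  | zero => exact measurable_fst
  | succ l ih => exact hf.comp (ih.prodMk ((measurable_pi_apply l).comp measurable_snd))

/-- Extension of a finite tuple of disturbances to an infinite sequence (by `0`). -/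
def extSeq {m : ℕ} (k : ℕ) (ω : Fin k → Fin m → ℝ) : ℕ → Fin m → ℝ :=
  fun i => if h : i < k then ω ⟨i, h⟩ else 0

lemma measurable_extSeq {m k : ℕ} : Measurable (extSeq (m := m) k) := by
  apply measurable_pi_lambda
  intro i
  by_cases h : i < k
  · simp only [extSeq, dif_pos h]
    exact measurable_pi_apply _
  · simp only [extSeq, dif_neg h]
    exact measurable_const

/-- Finite-horizon reach-avoid event, expressed on tuples of the first `k` disturbances. -/
def Bset {n m : ℕ} (f : (Fin n → ℝ) → (Fin m → ℝ) → (Fin n → ℝ))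
    (X Xr : Set (Fin n → ℝ)) (k : ℕ) (x : Fin n → ℝ) : Set (Fin k → Fin m → ℝ) :=
  {ω | ∃ j, j ≤ k ∧ traj f x (extSeq k ω) j ∈ Xr ∧ ∀ l, l ≤ j → traj f x (extSeq k ω) l ∈ X}

lemma measurableSet_Bset_prod (hf : Measurable fun p : (Fin n → ℝ) × (Fin m → ℝ) => f p.1 p.2)
    {X Xr : Set (Fin n → ℝ)} (hX : MeasurableSet X) (hXr : MeasurableSet Xr) (k : ℕ) :
    MeasurableSet {p : (Fin n → ℝ) × (Fin k → Fin m → ℝ) | p.2 ∈ Bset f X Xr k p.1} := by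
  have hmeas : ∀ l, Measurable fun p : (Fin n → ℝ) × (Fin k → Fin m → ℝ) =>
      traj f p.1 (extSeq k p.2) l := fun l =>
    (measurable_traj hf l).comp (measurable_fst.prodMk (measurable_extSeq.comp measurable_snd))
  have heq : {p : (Fin n → ℝ) × (Fin k → Fin m → ℝ) | p.2 ∈ Bset f X Xr k p.1} =
      ⋃ j, ⋃ (_ : j ≤ k), ({p : (Fin n → ℝ) × (Fin k → Fin m → ℝ) |
          traj f p.1 (extSeq k p.2) j ∈ Xr} ∩
        ⋂ l, ⋂ (_ : l ≤ j), {p : (Fin n → ℝ) × (Fin k → Fin m → ℝ) |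
          traj f p.1 (extSeq k p.2) l ∈ X}) := by
    ext p
    simp only [Set.mem_setOf_eq, Bset, Set.mem_iUnion, Set.mem_inter_iff, Set.mem_iInter,
      exists_prop]
  rw [heq]
  exact MeasurableSet.iUnion fun j => MeasurableSet.iUnion fun _ =>
    (hmeas j hXr).inter (MeasurableSet.iInter fun l => MeasurableSet.iInter fun _ => hmeas l hX)

lemma cons_mem_Bset {X Xr : Set (Fin n → ℝ)} {x : Fin n → ℝ} (hx : x ∈ X)
    (k : ℕ) (d : Fin m → ℝ) (ω : Fin k → Fin m → ℝ)
    (hω : ω ∈ Bset f X Xr k (f x d)) : Fin.cons d ω ∈ Bset f X Xr (k + 1) x := by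
  obtain ⟨j, hj, hr, hs⟩ := hω
  have hext : extSeq (k + 1) (Fin.cons d ω) 0 = d := by
    simp [extSeq]
  have hshift : (fun i => extSeq (k + 1) (Fin.cons d ω) (i + 1)) = extSeq k ω := by
    funext i
    simp only [extSeq]
    by_cases h : i < k
    · rw [dif_pos (Nat.succ_lt_succ h), dif_pos h]
      have h2 : (⟨i + 1, Nat.succ_lt_succ h⟩ : Fin (k + 1)) = Fin.succ ⟨i, h⟩ := rfl
      rw [h2, Fin.cons_succ]
    · rw [dif_neg (fun hc => h (Nat.lt_of_succ_lt_succ hc)), dif_neg h]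
  have htr : ∀ l, traj f x (extSeq (k + 1) (Fin.cons d ω)) (l + 1)
      = traj f (f x d) (extSeq k ω) l := by
    intro l
    rw [traj_shift, hext, hshift]
  refine ⟨j + 1, Nat.succ_le_succ hj, ?_, ?_⟩
  · rw [htr]; exact hr
  · intro l hl
    cases l with
    | zero => exact hx
    | succ l' =>
        rw [htr]
        exact hs l' (Nat.succ_le_succ_iff.mp hl)

end Aux

/-- Proposition 1: relaxation of the reach-avoid equation certifies a
lower bound `ε₁` on the reach-avoid probability. -/
theorem statement_1 {n m : ℕ}
    (f : (Fin n → ℝ) → (Fin m → ℝ) → (Fin n → ℝ))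
    (hf : Measurable fun p : (Fin n → ℝ) × (Fin m → ℝ) => f p.1 p.2)
    (D : Set (Fin m → ℝ)) (hD : MeasurableSet D)
    (μ : Measure (Fin m → ℝ)) [IsProbabilityMeasure μ] (hμD : μ D = 1)
    (Pinf : Measure (ℕ → Fin m → ℝ)) [IsProbabilityMeasure Pinf]
    (hPinf : ∀ (s : Finset ℕ) (B : ℕ → Set (Fin m → ℝ)), (∀ i, MeasurableSet (B i)) →
      Pinf {π : ℕ → Fin m → ℝ | ∀ i ∈ s, π i ∈ B i} = ∏ i ∈ s, μ (B i))
    (X Xr X0 Xhat : Set (Fin n → ℝ))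
    (hX : MeasurableSet X) (hXr : MeasurableSet Xr) (hX0 : MeasurableSet X0)
    (hXhat : MeasurableSet Xhat)
    (hXrX : Xr ⊆ X) (hX0X : X0 ⊆ X) (hXXhat : X ⊆ Xhat)
    (hreach : ∀ x ∈ X, ∀ d ∈ D, f x d ∈ Xhat)
    (ε₁ : ℝ) (hε₁ : ε₁ ∈ Set.Icc (0 : ℝ) 1)
    (v w : (Fin n → ℝ) → ℝ) (hv : Measurable v) (hw : Measurable w)
    (hvb : ∃ C, ∀ x ∈ Xhat, |v x| ≤ C) (hwb : ∃ C, ∀ x ∈ Xhat, |w x| ≤ C)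
    (h1 : ∀ x ∈ X0, ε₁ ≤ v x)
    (h2 : ∀ x ∈ X \ Xr, v x ≤ ∫ d in D, v (f x d) ∂μ)
    (h3 : ∀ x ∈ X \ Xr, v x ≤ (∫ d in D, w (f x d) ∂μ) - w x)
    (h4 : ∀ x ∈ Xr, v x ≤ 1)
    (h5 : ∀ x ∈ Xhat \ X, v x ≤ 0) :
    ∀ x0 ∈ X0,
      ε₁ ≤ (Pinf {π : ℕ → Fin m → ℝ |
        ∃ k : ℕ, traj f x0 π k ∈ Xr ∧ ∀ l ≤ k, traj f x0 π l ∈ X}).toReal := by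
  classical
  intro x0 hx0
  obtain ⟨Cv₀, hCv₀⟩ := hvb
  obtain ⟨Cw₀, hCw₀⟩ := hwb
  set Cv : ℝ := max Cv₀ 0 with hCvdef
  set Cw : ℝ := max Cw₀ 0 with hCwdef
  set V : (Fin n → ℝ) → ℝ := Xhat.indicator v with hVdef
  set W : (Fin n → ℝ) → ℝ := Xhat.indicator w with hWdef
  have hVmeas : Measurable V := hv.indicator hXhat
  have hWmeas : Measurable W := hw.indicator hXhat
  have hVbdd : ∀ y, |V y| ≤ Cv := by
    intro y
    by_cases h : y ∈ Xhat
    · rw [hVdef, Set.indicator_of_mem h]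
      exact (hCv₀ y h).trans (le_max_left _ _)
    · rw [hVdef, Set.indicator_of_notMem h, abs_zero]
      exact le_max_right _ _
  have hWbdd : ∀ y, |W y| ≤ Cw := by
    intro y
    by_cases h : y ∈ Xhat
    · rw [hWdef, Set.indicator_of_mem h]
      exact (hCw₀ y h).trans (le_max_left _ _)
    · rw [hWdef, Set.indicator_of_notMem h, abs_zero]
      exact le_max_right _ _
  -- the one-step "stopped" transition operator
  set T : ((Fin n → ℝ) → ℝ) → ((Fin n → ℝ) → ℝ) :=
    fun g x => if x ∈ X \ Xr then ∫ d in D, g (f x d) ∂μ else g x with hTdef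
  have hInt : ∀ (g : (Fin n → ℝ) → ℝ) (C : ℝ), Measurable g → (∀ y, |g y| ≤ C) →
      ∀ x, Integrable (fun d => g (f x d)) (μ.restrict D) := by
    intro g C hg hgb x
    refine Integrable.mono' (integrable_const C) ?_ ?_
    · exact (hg.comp (hf.comp measurable_prodMk_left)).aestronglyMeasurable
    · exact Eventually.of_forall fun d => by simpa using hgb (f x d)
  have hTmeas : ∀ g : (Fin n → ℝ) → ℝ, Measurable g → Measurable (T g) := by
    intro g hg
    have hint : Measurable fun x => ∫ d in D, g (f x d) ∂μ := by
      have hsm : StronglyMeasurable fun p : (Fin n → ℝ) × (Fin m → ℝ) => g (f p.1 p.2) :=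
        (hg.comp hf).stronglyMeasurable
      exact hsm.integral_prod_right'.measurable
    exact Measurable.ite (hX.diff hXr) hint hg
  have hTbdd : ∀ (g : (Fin n → ℝ) → ℝ) (C : ℝ), (∀ y, |g y| ≤ C) → ∀ y, |T g y| ≤ C := by
    intro g C hgb y
    by_cases h : y ∈ X \ Xr
    · simp only [hTdef, if_pos h]
      have hb : ‖∫ d in D, g (f y d) ∂μ‖ ≤ C * ((μ.restrict D) Set.univ).toReal := by
        apply norm_integral_le_of_norm_le_const
        exact Eventually.of_forall fun d => by simpa using hgb (f y d)
      rw [Measure.restrict_apply_univ, hμD] at hb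
      simpa using hb
    · simp only [hTdef, if_neg h]
      exact hgb y
  have hTmono : ∀ (g h : (Fin n → ℝ) → ℝ) (C C' : ℝ), Measurable g → Measurable h →
      (∀ y, |g y| ≤ C) → (∀ y, |h y| ≤ C') → (∀ y, g y ≤ h y) → ∀ y, T g y ≤ T h y := by
    intro g h C C' hg hh hgb hhb hle y
    by_cases hy : y ∈ X \ Xr
    · simp only [hTdef, if_pos hy]
      exact integral_mono (hInt g C hg hgb y) (hInt h C' hh hhb y) fun d => hle (f y d)
    · simp only [hTdef, if_neg hy]
      exact hle y
  have hTadd : ∀ (g h : (Fin n → ℝ) → ℝ) (C C' : ℝ), Measurable g → Measurable h →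
      (∀ y, |g y| ≤ C) → (∀ y, |h y| ≤ C') →
      ∀ y, T (fun z => g z + h z) y = T g y + T h y := by
    intro g h C C' hg hh hgb hhb y
    by_cases hy : y ∈ X \ Xr
    · simp only [hTdef, if_pos hy]
      exact integral_add (hInt g C hg hgb y) (hInt h C' hh hhb y)
    · simp only [hTdef, if_neg hy]
  have hTsub : ∀ (g h : (Fin n → ℝ) → ℝ) (C C' : ℝ), Measurable g → Measurable h →
      (∀ y, |g y| ≤ C) → (∀ y, |h y| ≤ C') →
      ∀ y, T (fun z => g z - h z) y = T g y - T h y := by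
    intro g h C C' hg hh hgb hhb y
    by_cases hy : y ∈ X \ Xr
    · simp only [hTdef, if_pos hy]
      exact integral_sub (hInt g C hg hgb y) (hInt h C' hh hhb y)
    · simp only [hTdef, if_neg hy]
  have hIter : ∀ (g : (Fin n → ℝ) → ℝ) (C : ℝ), Measurable g → (∀ y, |g y| ≤ C) →
      ∀ k, Measurable (T^[k] g) ∧ ∀ y, |T^[k] g y| ≤ C := by
    intro g C hg hgb k
    induction k with
    | zero => exact ⟨hg, hgb⟩
    | succ k ih =>
        rw [Function.iterate_succ_apply']
        exact ⟨hTmeas _ ih.1, hTbdd _ C ih.2⟩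
  have hIterMono : ∀ (g h : (Fin n → ℝ) → ℝ) (C C' : ℝ), Measurable g → Measurable h →
      (∀ y, |g y| ≤ C) → (∀ y, |h y| ≤ C') → (∀ y, g y ≤ h y) →
      ∀ k y, T^[k] g y ≤ T^[k] h y := by
    intro g h C C' hg hh hgb hhb hle k
    induction k with
    | zero => exact hle
    | succ k ih =>
        intro y
        rw [Function.iterate_succ_apply', Function.iterate_succ_apply']
        exact hTmono _ _ C C' (hIter g C hg hgb k).1 (hIter h C' hh hhb k).1
          (hIter g C hg hgb k).2 (hIter h C' hh hhb k).2 ih y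
  have hIterAdd : ∀ (g h : (Fin n → ℝ) → ℝ) (C C' : ℝ), Measurable g → Measurable h →
      (∀ y, |g y| ≤ C) → (∀ y, |h y| ≤ C') →
      ∀ k y, T^[k] (fun z => g z + h z) y = T^[k] g y + T^[k] h y := by
    intro g h C C' hg hh hgb hhb k
    induction k with
    | zero => intro y; rfl
    | succ k ih =>
        intro y
        rw [Function.iterate_succ_apply', Function.iterate_succ_apply',
          Function.iterate_succ_apply']
        have hfun : T^[k] (fun z => g z + h z) = fun z => T^[k] g z + T^[k] h z := funext ih
        rw [hfun]
        exact hTadd (T^[k] g) (T^[k] h) C C' (hIter g C hg hgb k).1 (hIter h C' hh hhb k).1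
          (hIter g C hg hgb k).2 (hIter h C' hh hhb k).2 y
  have hIterSub : ∀ (g h : (Fin n → ℝ) → ℝ) (C C' : ℝ), Measurable g → Measurable h →
      (∀ y, |g y| ≤ C) → (∀ y, |h y| ≤ C') →
      ∀ k y, T^[k] (fun z => g z - h z) y = T^[k] g y - T^[k] h y := by
    intro g h C C' hg hh hgb hhb k
    induction k with
    | zero => intro y; rfl
    | succ k ih =>
        intro y
        rw [Function.iterate_succ_apply', Function.iterate_succ_apply',
          Function.iterate_succ_apply']
        have hfun : T^[k] (fun z => g z - h z) = fun z => T^[k] g z - T^[k] h z := funext ih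
        rw [hfun]
        exact hTsub (T^[k] g) (T^[k] h) C C' (hIter g C hg hgb k).1 (hIter h C' hh hhb k).1
          (hIter g C hg hgb k).2 (hIter h C' hh hhb k).2 y
  -- transferred hypotheses for the truncated functions
  have hVv : ∀ y ∈ Xhat, V y = v y := fun y hy => Set.indicator_of_mem hy v
  have hWw : ∀ y ∈ Xhat, W y = w y := fun y hy => Set.indicator_of_mem hy w
  have hintcongr : ∀ (g G : (Fin n → ℝ) → ℝ), (∀ y ∈ Xhat, G y = g y) → ∀ x ∈ X,
      (∫ d in D, G (f x d) ∂μ) = ∫ d in D, g (f x d) ∂μ := by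
    intro g G hGg x hx
    apply setIntegral_congr_fun hD
    intro d hd
    exact hGg _ (hreach x hx d hd)
  have h1' : ε₁ ≤ V x0 := by
    rw [hVv x0 (hXXhat (hX0X hx0))]
    exact h1 x0 hx0
  have h2' : ∀ y ∈ X \ Xr, V y ≤ ∫ d in D, V (f y d) ∂μ := by
    intro y hy
    rw [hVv y (hXXhat hy.1), hintcongr v V hVv y hy.1]
    exact h2 y hy
  have h3' : ∀ y ∈ X \ Xr, V y ≤ (∫ d in D, W (f y d) ∂μ) - W y := by
    intro y hy
    rw [hVv y (hXXhat hy.1), hWw y (hXXhat hy.1), hintcongr w W hWw y hy.1]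
    exact h3 y hy
  have h4' : ∀ y ∈ Xr, V y ≤ 1 := by
    intro y hy
    rw [hVv y (hXXhat (hXrX hy))]
    exact h4 y hy
  have h5' : ∀ y, y ∉ X → V y ≤ 0 := by
    intro y hy
    by_cases h : y ∈ Xhat
    · rw [hVv y h]; exact h5 y ⟨h, hy⟩
    · rw [hVdef, Set.indicator_of_notMem h]
  set chi : (Fin n → ℝ) → ℝ := Xr.indicator (fun _ => 1) with hchidef
  set Vpsi : (Fin n → ℝ) → ℝ := (X \ Xr).indicator V with hVpsidef
  have hchimeas : Measurable chi := measurable_const.indicator hXr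
  have hchibdd : ∀ y, |chi y| ≤ 1 := by
    intro y
    by_cases h : y ∈ Xr <;> simp [hchidef, Set.indicator_apply, h]
  have hVpsimeas : Measurable Vpsi := hVmeas.indicator (hX.diff hXr)
  have hVpsibdd : ∀ y, |Vpsi y| ≤ Cv := by
    intro y
    by_cases h : y ∈ X \ Xr
    · rw [hVpsidef, Set.indicator_of_mem h]; exact hVbdd y
    · rw [hVpsidef, Set.indicator_of_notMem h, abs_zero]; exact le_max_right _ _
  -- (1) submartingale property
  have hVle : ∀ y, V y ≤ T V y := by
    intro y
    by_cases hy : y ∈ X \ Xr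
    · simp only [hTdef, if_pos hy]
      exact h2' y hy
    · simp only [hTdef, if_neg hy]
      exact le_refl _
  have hlower : ∀ k, ε₁ ≤ T^[k] V x0 := by
    intro k
    induction k with
    | zero => exact h1'
    | succ k ih =>
        have hm : T^[k] V x0 ≤ T^[k + 1] V x0 := by
          rw [Function.iterate_succ_apply]
          exact hIterMono V (T V) Cv Cv hVmeas (hTmeas V hVmeas) hVbdd
            (hTbdd V Cv hVbdd) hVle k x0
        linarith
  -- (2) split v ≤ χ_{Xr} + v·χ_{X\Xr}
  have hsplit : ∀ y, V y ≤ chi y + Vpsi y := by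
    intro y
    by_cases hyr : y ∈ Xr
    · have hnot : y ∉ X \ Xr := fun h => h.2 hyr
      rw [hchidef, Set.indicator_of_mem hyr, hVpsidef, Set.indicator_of_notMem hnot]
      simpa using h4' y hyr
    · by_cases hyX : y ∈ X
      · have hmem : y ∈ X \ Xr := ⟨hyX, hyr⟩
        rw [hchidef, Set.indicator_of_notMem hyr, hVpsidef, Set.indicator_of_mem hmem]
        simp
      · have hnot : y ∉ X \ Xr := fun h => hyX h.1
        rw [hchidef, Set.indicator_of_notMem hyr, hVpsidef, Set.indicator_of_notMem hnot]
        simpa using h5' y hyX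
  have hsum : ∀ k, ε₁ ≤ T^[k] chi x0 + T^[k] Vpsi x0 := by
    intro k
    have hcb : ∀ y, |chi y + Vpsi y| ≤ 1 + Cv := fun y =>
      (abs_add_le _ _).trans (add_le_add (hchibdd y) (hVpsibdd y))
    have hm := hIterMono V (fun z => chi z + Vpsi z) Cv (1 + Cv) hVmeas
      (hchimeas.add hVpsimeas) hVbdd hcb hsplit k x0
    have ha := hIterAdd chi Vpsi 1 Cv hchimeas hVpsimeas hchibdd hVpsibdd k x0
    have hl := hlower k
    linarith
  -- (3) drift condition
  have hdrift : ∀ y, Vpsi y ≤ T W y - W y := by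
    intro y
    by_cases hy : y ∈ X \ Xr
    · rw [hVpsidef, Set.indicator_of_mem hy]
      simp only [hTdef, if_pos hy]
      exact h3' y hy
    · rw [hVpsidef, Set.indicator_of_notMem hy]
      simp only [hTdef, if_neg hy]
      simp
  have hSbound : ∀ k, T^[k] Vpsi x0 ≤ T^[k + 1] W x0 - T^[k] W x0 := by
    intro k
    have hTWmeas : Measurable (T W) := hTmeas W hWmeas
    have hTWbdd : ∀ y, |T W y| ≤ Cw := hTbdd W Cw hWbdd
    have hdmeas : Measurable fun z => T W z - W z := hTWmeas.sub hWmeas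
    have hdbdd : ∀ y, |T W y - W y| ≤ Cw + Cw := fun y =>
      (abs_sub (T W y) (W y)).trans (add_le_add (hTWbdd y) (hWbdd y))
    have hm := hIterMono Vpsi (fun z => T W z - W z) Cv (Cw + Cw) hVpsimeas hdmeas
      hVpsibdd hdbdd hdrift k x0
    have hs := hIterSub (T W) W Cw Cw hTWmeas hWmeas hTWbdd hWbdd k x0
    rw [hs] at hm
    rwa [← Function.iterate_succ_apply] at hm
  have htel : ∀ k, ∑ l ∈ Finset.range k, T^[l] Vpsi x0 ≤ 2 * Cw := by
    intro k
    have hle : ∑ l ∈ Finset.range k, T^[l] Vpsi x0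
        ≤ ∑ l ∈ Finset.range k, (T^[l + 1] W x0 - T^[l] W x0) :=
      Finset.sum_le_sum fun l _ => hSbound l
    rw [Finset.sum_range_sub (fun l => T^[l] W x0)] at hle
    have b1 := abs_le.mp ((hIter W Cw hWmeas hWbdd k).2 x0)
    have b2 := abs_le.mp (hWbdd x0)
    have hb0 : T^[0] W x0 = W x0 := rfl
    rw [hb0] at hle
    linarith [b1.1, b1.2, b2.1, b2.2]
  -- (4) monotonicity of the reach probabilities
  have hchi_le : ∀ y, chi y ≤ T chi y := by
    intro y
    by_cases hy : y ∈ X \ Xr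
    · simp only [hTdef, if_pos hy]
      have h0 : chi y = 0 := Set.indicator_of_notMem hy.2 _
      rw [h0]
      apply integral_nonneg
      intro d
      by_cases h : f y d ∈ Xr <;> simp [hchidef, Set.indicator_apply, h]
    · simp only [hTdef, if_neg hy]
      exact le_refl _
  have hPmono : Monotone fun k => T^[k] chi x0 := by
    apply monotone_nat_of_le_succ
    intro k
    show T^[k] chi x0 ≤ T^[k + 1] chi x0
    rw [Function.iterate_succ_apply]
    exact hIterMono chi (T chi) 1 1 hchimeas (hTmeas chi hchimeas) hchibdd
      (hTbdd chi 1 hchibdd) hchi_le k x0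
  -- (5) the key quantitative bound
  have hkey : ∀ k : ℕ, (k : ℝ) * (ε₁ - T^[k] chi x0) ≤ 2 * Cw := by
    intro k
    have hterm : ∀ l ∈ Finset.range k, ε₁ - T^[k] chi x0 ≤ T^[l] Vpsi x0 := by
      intro l hl
      have hlk : T^[l] chi x0 ≤ T^[k] chi x0 :=
        hPmono (le_of_lt (Finset.mem_range.mp hl))
      have hsl := hsum l
      linarith
    calc (k : ℝ) * (ε₁ - T^[k] chi x0)
        = ∑ _l ∈ Finset.range k, (ε₁ - T^[k] chi x0) := by
          rw [Finset.sum_const, Finset.card_range, nsmul_eq_mul]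
      _ ≤ ∑ l ∈ Finset.range k, T^[l] Vpsi x0 := Finset.sum_le_sum hterm
      _ ≤ 2 * Cw := htel k
  -- absorbing states outside X \ Xr
  have habs : ∀ (k : ℕ) (y : Fin n → ℝ), y ∉ X \ Xr → T^[k] chi y = chi y := by
    intro k
    induction k with
    | zero => intro y _; rfl
    | succ k ih =>
        intro y hy
        rw [Function.iterate_succ_apply']
        simp only [hTdef, if_neg hy]
        exact ih y hy
  -- (6) bridge: T^[k] chi x ≤ finite-horizon reach-avoid probability
  have htoReal_le_one : ∀ (k : ℕ) (B : Set (Fin k → Fin m → ℝ)),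
      ((Measure.pi fun _ : Fin k => μ) B).toReal ≤ 1 := by
    intro k B
    have h := prob_le_one (μ := Measure.pi fun _ : Fin k => μ) (s := B)
    have := ENNReal.toReal_mono (by simp) h
    simpa using this
  have hBuniv : ∀ (k : ℕ) (x : Fin n → ℝ), x ∈ Xr → Bset f X Xr k x = Set.univ := by
    intro k x hx
    apply Set.eq_univ_of_forall
    intro ω
    refine ⟨0, Nat.zero_le _, hx, ?_⟩
    intro l hl
    rw [Nat.le_zero.mp hl]
    exact hXrX hx
  have hbridge : ∀ (k : ℕ) (x : Fin n → ℝ),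
      T^[k] chi x ≤ ((Measure.pi fun _ : Fin k => μ) (Bset f X Xr k x)).toReal := by
    intro k
    induction k with
    | zero =>
        intro x
        by_cases hx : x ∈ Xr
        · rw [hBuniv 0 x hx, measure_univ]
          have : chi x = 1 := Set.indicator_of_mem hx _
          simpa [this] using le_refl (1 : ℝ)
        · have h0 : chi x = 0 := Set.indicator_of_notMem hx _
          show chi x ≤ _
          rw [h0]
          exact ENNReal.toReal_nonneg
    | succ k ih =>
        intro x
        by_cases hxr : x ∈ Xr
        · rw [hBuniv (k + 1) x hxr, measure_univ]
          have := abs_le.mp ((hIter chi 1 hchimeas hchibdd (k + 1)).2 x)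
          simpa using this.2
        · by_cases hx : x ∈ X \ Xr
          · -- the main Markov step
            have hTx : T^[k + 1] chi x = ∫ d in D, T^[k] chi (f x d) ∂μ := by
              rw [Function.iterate_succ_apply']
              simp only [hTdef, if_pos hx]
            rw [hTx]
            set e := MeasurableEquiv.piFinSuccAbove (fun _ : Fin (k + 1) => (Fin m → ℝ)) 0
              with hedef
            have hJ1 : MeasurableSet {p : (Fin n → ℝ) × (Fin (k + 1) → Fin m → ℝ) |
                p.2 ∈ Bset f X Xr (k + 1) p.1} := measurableSet_Bset_prod hf hX hXr (k + 1)
            have hJk : MeasurableSet {p : (Fin n → ℝ) × (Fin k → Fin m → ℝ) |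
                p.2 ∈ Bset f X Xr k p.1} := measurableSet_Bset_prod hf hX hXr k
            have hBk1 : MeasurableSet (Bset f X Xr (k + 1) x) :=
              measurable_prodMk_left hJ1
            set S : Set ((Fin m → ℝ) × (Fin k → Fin m → ℝ)) := e.symm ⁻¹' (Bset f X Xr (k + 1) x)
              with hSdef
            have hS : MeasurableSet S := e.symm.measurable hBk1
            have hesymm : ∀ (d : Fin m → ℝ) (ω : Fin k → Fin m → ℝ),
                e.symm (d, ω) = Fin.cons d ω := by
              intro d ω
              simp [hedef, MeasurableEquiv.piFinSuccAbove, Fin.insertNthEquiv,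
                Fin.insertNth_zero']
            have hslice : ∀ d : Fin m → ℝ,
                Bset f X Xr k (f x d) ⊆ Prod.mk d ⁻¹' S := by
              intro d ω hω
              show e.symm (d, ω) ∈ Bset f X Xr (k + 1) x
              rw [hesymm d ω]
              exact cons_mem_Bset hx.1 k d ω hω
            have hmeasB : Measurable fun y => (Measure.pi fun _ : Fin k => μ)
                (Bset f X Xr k y) := by
              have := measurable_measure_prodMk_left
                (ν := Measure.pi fun _ : Fin k => μ) hJk
              exact this
            have hmeasBd : Measurable fun d => ((Measure.pi fun _ : Fin k => μ)
                (Bset f X Xr k (f x d))).toReal := by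
              apply Measurable.ennreal_toReal
              exact hmeasB.comp (hf.comp measurable_prodMk_left)
            have hmeasS : Measurable fun d => ((Measure.pi fun _ : Fin k => μ)
                (Prod.mk d ⁻¹' S)).toReal :=
              (measurable_measure_prodMk_left hS).ennreal_toReal
            have hintBd : Integrable (fun d => ((Measure.pi fun _ : Fin k => μ)
                (Bset f X Xr k (f x d))).toReal) (μ.restrict D) := by
              refine Integrable.mono' (integrable_const 1) hmeasBd.aestronglyMeasurable ?_
              exact Eventually.of_forall fun d => by
                simpa [abs_of_nonneg ENNReal.toReal_nonneg] using htoReal_le_one k _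
            have hintS : Integrable (fun d => ((Measure.pi fun _ : Fin k => μ)
                (Prod.mk d ⁻¹' S)).toReal) μ := by
              refine Integrable.mono' (integrable_const 1) hmeasS.aestronglyMeasurable ?_
              exact Eventually.of_forall fun d => by
                simpa [abs_of_nonneg ENNReal.toReal_nonneg] using htoReal_le_one k _
            have step1 : (∫ d in D, T^[k] chi (f x d) ∂μ)
                ≤ ∫ d in D, ((Measure.pi fun _ : Fin k => μ)
                    (Bset f X Xr k (f x d))).toReal ∂μ :=
              integral_mono (hInt (T^[k] chi) 1 (hIter chi 1 hchimeas hchibdd k).1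
                (hIter chi 1 hchimeas hchibdd k).2 x) hintBd fun d => ih (f x d)
            have step2 : (∫ d in D, ((Measure.pi fun _ : Fin k => μ)
                    (Bset f X Xr k (f x d))).toReal ∂μ)
                ≤ ∫ d in D, ((Measure.pi fun _ : Fin k => μ)
                    (Prod.mk d ⁻¹' S)).toReal ∂μ := by
              apply integral_mono hintBd (hintS.restrict)
              intro d
              exact ENNReal.toReal_mono (measure_ne_top _ _) (measure_mono (hslice d))
            have step3 : (∫ d in D, ((Measure.pi fun _ : Fin k => μ)
                    (Prod.mk d ⁻¹' S)).toReal ∂μ)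
                ≤ ∫ d, ((Measure.pi fun _ : Fin k => μ) (Prod.mk d ⁻¹' S)).toReal ∂μ := by
              apply setIntegral_le_integral hintS
              exact Eventually.of_forall fun d => ENNReal.toReal_nonneg
            have step4 : (∫ d, ((Measure.pi fun _ : Fin k => μ) (Prod.mk d ⁻¹' S)).toReal ∂μ)
                = ((μ.prod (Measure.pi fun _ : Fin k => μ)) S).toReal := by
              rw [Measure.prod_apply hS]
              exact integral_toReal (measurable_measure_prodMk_left hS).aemeasurable
                (Eventually.of_forall fun d => measure_lt_top _ _)
            have step5 : (μ.prod (Measure.pi fun _ : Fin k => μ)) S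
                = (Measure.pi fun _ : Fin (k + 1) => μ) (Bset f X Xr (k + 1) x) := by
              have hmp := measurePreserving_piFinSuccAbove (fun _ : Fin (k + 1) => μ) 0
              have hmapeq := hmp.map_eq
              calc (μ.prod (Measure.pi fun _ : Fin k => μ)) S
                  = (Measure.map e (Measure.pi fun _ : Fin (k + 1) => μ)) S := by
                    rw [hmapeq]
                _ = (Measure.pi fun _ : Fin (k + 1) => μ) (e ⁻¹' S) := by
                    rw [Measure.map_apply e.measurable hS]
                _ = (Measure.pi fun _ : Fin (k + 1) => μ) (Bset f X Xr (k + 1) x) := by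
                    congr 1
                    rw [hSdef, ← Set.preimage_comp]
                    have : e.symm ∘ e = id := by
                      funext z
                      exact e.symm_apply_apply z
                    rw [this, Set.preimage_id]
            calc (∫ d in D, T^[k] chi (f x d) ∂μ)
                ≤ ∫ d in D, ((Measure.pi fun _ : Fin k => μ)
                    (Bset f X Xr k (f x d))).toReal ∂μ := step1
              _ ≤ ∫ d in D, ((Measure.pi fun _ : Fin k => μ)
                    (Prod.mk d ⁻¹' S)).toReal ∂μ := step2
              _ ≤ ∫ d, ((Measure.pi fun _ : Fin k => μ) (Prod.mk d ⁻¹' S)).toReal ∂μ := step3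
              _ = ((μ.prod (Measure.pi fun _ : Fin k => μ)) S).toReal := step4
              _ = ((Measure.pi fun _ : Fin (k + 1) => μ)
                    (Bset f X Xr (k + 1) x)).toReal := by rw [step5]
          · -- absorbing outside X
            have h0 : chi x = 0 := Set.indicator_of_notMem hxr _
            rw [habs (k + 1) x hx, h0]
            exact ENNReal.toReal_nonneg
  -- marginal lemma: the law of the first k coordinates under Pinf is the product measure
  have hmarg : ∀ (k : ℕ) (B : Set (Fin k → Fin m → ℝ)), MeasurableSet B →
      Pinf ((fun (π : ℕ → Fin m → ℝ) (i : Fin k) => π i) ⁻¹' B)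
        = (Measure.pi fun _ : Fin k => μ) B := by
    intro k B hB
    have hres : Measurable fun (π : ℕ → Fin m → ℝ) (i : Fin k) => π i :=
      measurable_pi_lambda _ fun i => measurable_pi_apply _
    have hmapeq : Pinf.map (fun (π : ℕ → Fin m → ℝ) (i : Fin k) => π i)
        = Measure.pi fun _ : Fin k => μ := by
      refine (Measure.pi_eq fun s hs => ?_).symm
      rw [Measure.map_apply hres (MeasurableSet.univ_pi hs)]
      have hset : (fun (π : ℕ → Fin m → ℝ) (i : Fin k) => π i) ⁻¹' Set.pi Set.univ s =
          {π : ℕ → Fin m → ℝ | ∀ i ∈ Finset.range k,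
            π i ∈ (fun i => if h : i < k then s ⟨i, h⟩ else Set.univ) i} := by
        ext π
        simp only [Set.mem_preimage, Set.mem_pi, Set.mem_univ, forall_true_left,
          Set.mem_setOf_eq, Finset.mem_range, true_implies]
        constructor
        · intro h i hi
          rw [dif_pos hi]
          exact h ⟨i, hi⟩
        · intro h i
          have hh := h i.1 i.2
          rw [dif_pos i.2] at hh
          simpa using hh
      rw [hset, hPinf _ _ ?_]
      · rw [← Fin.prod_univ_eq_prod_range
          (fun i => μ (if h : i < k then s ⟨i, h⟩ else Set.univ)) k]
        apply Finset.prod_congr rfl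
        intro i _
        rw [dif_pos i.isLt]
      · intro i
        by_cases h : i < k
        · simp only [dif_pos h]
          exact hs _
        · simp only [dif_neg h]
          exact MeasurableSet.univ
    rw [← hmapeq, Measure.map_apply hres hB]
  -- connect with the event in the statement
  have hEk : ∀ k : ℕ, ((Measure.pi fun _ : Fin k => μ) (Bset f X Xr k x0)).toReal
      ≤ (Pinf {π : ℕ → Fin m → ℝ |
          ∃ j : ℕ, traj f x0 π j ∈ Xr ∧ ∀ l ≤ j, traj f x0 π l ∈ X}).toReal := by
    intro k
    have hBx0 : MeasurableSet (Bset f X Xr k x0) :=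
      measurable_prodMk_left (measurableSet_Bset_prod hf hX hXr k)
    have hsub : (fun (π : ℕ → Fin m → ℝ) (i : Fin k) => π i) ⁻¹' (Bset f X Xr k x0) ⊆
        {π : ℕ → Fin m → ℝ | ∃ j : ℕ, traj f x0 π j ∈ Xr ∧ ∀ l ≤ j, traj f x0 π l ∈ X} := by
      intro π hπ
      obtain ⟨j, hj, hr, hsafe⟩ := hπ
      have hagree : ∀ l, l ≤ k →
          traj f x0 (extSeq k fun i : Fin k => π i) l = traj f x0 π l := by
        intro l hl
        apply traj_congr
        intro i hi
        have hik : i < k := lt_of_lt_of_le hi hl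
        simp [extSeq, hik]
      refine ⟨j, ?_, ?_⟩
      · rw [← hagree j hj]; exact hr
      · intro l hl
        rw [← hagree l (le_trans hl hj)]
        exact hsafe l hl
    rw [← hmarg k _ hBx0]
    exact ENNReal.toReal_mono (measure_ne_top _ _) (measure_mono hsub)
  -- (7) conclusion
  have hfinal : ∀ k : ℕ, 0 < k → ε₁ ≤ (Pinf {π : ℕ → Fin m → ℝ |
      ∃ j : ℕ, traj f x0 π j ∈ Xr ∧ ∀ l ≤ j, traj f x0 π l ∈ X}).toReal + 2 * Cw / k := by
    intro k hk
    have hkpos : (0 : ℝ) < k := by exact_mod_cast hk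
    have hk1 := hkey k
    have hk2 : ε₁ - T^[k] chi x0 ≤ 2 * Cw / k := by
      rw [le_div_iff₀ hkpos]
      linarith [hk1, mul_comm (ε₁ - T^[k] chi x0) (k : ℝ)]
    have hk3 := (hbridge k x0).trans (hEk k)
    linarith
  apply le_of_forall_pos_le_add
  intro ε hε
  obtain ⟨k, hk⟩ := exists_nat_gt (max (2 * Cw / ε) 0)
  have hkposR : (0 : ℝ) < k := lt_of_le_of_lt (le_max_right _ _) hk
  have hkpos : 0 < k := by exact_mod_cast hkposR
  have hdiv : 2 * Cw / k ≤ ε := by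
    rw [div_le_iff₀ hkposR]
    have h2 : 2 * Cw / ε < k := lt_of_le_of_lt (le_max_left _ _) hk
    rw [div_lt_iff₀ hε] at h2
    linarith
  have := hfinal k hkpos
  linarith
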